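/- Let N, d, d' be positive natural numbers, let A be an N×N real matrix with all entries nonnegative, let ε be a real number with ε > -1, let W be a d×d' real matrix such that the linear map v ↦ vᵀ·W from ℝ^d to ℝ^{d'} is surjective, let X be an N×d real feature matrix, and let S be a nonempty subset of {1,…,N}. Then for every target vector ẑ ∈ ℝ^{d'} there exists a vector p̂ ∈ ℝ^d such that z_{A,ε,W}(X') = ẑ, where X' is the SUPT-prompted feature matrix obtained from X, S and p̂. (When the weight matrix has full row-reachable range, a subgraph-level prompt on any nonempty node subset can drive the sum-pooled single-layer GIN embedding to an arbitrary target, hence can match the output of any prompting function.) -/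

import Mathlib

open Matrix BigOperators

/-- Single-layer GIN graph embedding with sum readout:
the `j'`-th entry is the sum of the rows of `(A + (1+ε)•I) * X * W`. -/
noncomputable def ginEmbed {N d d' : ℕ} (A : Matrix (Fin N) (Fin N) ℝ) (ε : ℝ)
    (W : Matrix (Fin d) (Fin d') ℝ) (X : Matrix (Fin N) (Fin d) ℝ) : Fin d' → ℝ :=
  fun j' => ∑ i, ((A + (1 + ε) • (1 : Matrix (Fin N) (Fin N) ℝ)) * X * W) i j'

/-- SUPT-prompted feature matrix: add the prompt vector `phat` to the rows indexed by `S`. -/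
noncomputable def suptPrompt {N d : ℕ} (X : Matrix (Fin N) (Fin d) ℝ) (S : Finset (Fin N))
    (phat : Fin d → ℝ) : Matrix (Fin N) (Fin d) ℝ :=
  Matrix.of fun i j => if i ∈ S then X i j + phat j else X i j

/-- GPF-prompted feature matrix: add the prompt vector `p` to every row. -/
noncomputable def gpfPrompt {N d : ℕ} (X : Matrix (Fin N) (Fin d) ℝ)
    (p : Fin d → ℝ) : Matrix (Fin N) (Fin d) ℝ :=
  Matrix.of fun i j => X i j + p j

/-- When the linear map $v ↦ vᵀW$ is surjective, a subgraph-level prompt on any nonempty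
node subset can drive the sum-pooled single-layer GIN embedding to an arbitrary target. -/
theorem supt_hits_any_target
    (N d d' : ℕ) (hN : 0 < N) (hd : 0 < d) (hd' : 0 < d')
    (A : Matrix (Fin N) (Fin N) ℝ) (hA : ∀ i k, 0 ≤ A i k)
    (ε : ℝ) (hε : -1 < ε)
    (W : Matrix (Fin d) (Fin d') ℝ)
    (hW : Function.Surjective (fun v : Fin d → ℝ => v ᵥ* W))
    (X : Matrix (Fin N) (Fin d) ℝ)
    (S : Finset (Fin N)) (hS : S.Nonempty) :
    ∀ zhat : Fin d' → ℝ, ∃ phat : Fin d → ℝ,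
      ginEmbed A ε W (suptPrompt X S phat) = zhat := by
  intro zhat
  set M : Matrix (Fin N) (Fin N) ℝ := A + (1 + ε) • (1 : Matrix (Fin N) (Fin N) ℝ) with hM
  set z0 : Fin d' → ℝ := ginEmbed A ε W X with hz0
  set c : ℝ := ∑ k ∈ S, ∑ i, M i k with hc
  have hMk : ∀ k, ∑ i, M i k = (∑ i, A i k) + (1 + ε) := by
    intro k
    simp [hM, Matrix.add_apply, Matrix.smul_apply, Matrix.one_apply,
      Finset.sum_add_distrib]
  have hcpos : 0 < c := by
    refine Finset.sum_pos (fun k _ => ?_) hS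
    rw [hMk k]
    have h1 : 0 ≤ ∑ i, A i k := Finset.sum_nonneg fun i _ => hA i k
    linarith
  have hcne : c ≠ 0 := ne_of_gt hcpos
  obtain ⟨v, hv⟩ := hW (c⁻¹ • (zhat - z0))
  simp only [] at hv
  refine ⟨v, ?_⟩
  set D : Matrix (Fin N) (Fin d) ℝ := Matrix.of fun i j => if i ∈ S then v j else 0 with hD
  have h1 : suptPrompt X S v = X + D := by
    ext i j
    simp only [suptPrompt, hD, Matrix.add_apply, Matrix.of_apply]
    split <;> simp
  have h3 : ∀ i j, (M * D) i j = (∑ k ∈ S, M i k) * v j := by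
    intro i j
    simp only [Matrix.mul_apply, hD, Matrix.of_apply, mul_ite, mul_zero]
    rw [Finset.sum_ite_mem, Finset.univ_inter, Finset.sum_mul]
  have hvW : ∀ j', (v ᵥ* W) j' = ∑ j, v j * W j j' := by
    intro j'
    simp [Matrix.vecMul, dotProduct]
  funext j'
  have expand : ginEmbed A ε W (suptPrompt X S v) j'
      = z0 j' + ∑ i, (M * D * W) i j' := by
    rw [h1, hz0]
    simp only [ginEmbed, ← hM, Matrix.mul_add, Matrix.add_mul, Matrix.add_apply,
      Finset.sum_add_distrib]
  have key : ∑ i, (M * D * W) i j' = c * (v ᵥ* W) j' := by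
    have : ∀ i, (M * D * W) i j' = (∑ k ∈ S, M i k) * ∑ j, v j * W j j' := by
      intro i
      simp only [Matrix.mul_apply, h3]
      rw [Finset.mul_sum]
      congr 1; funext j; ring
    simp only [this, hvW, ← Finset.sum_mul]
    congr 1
    rw [hc, Finset.sum_comm]
  rw [expand, key]; rw [show v ᵥ* W = c⁻¹ • (zhat - z0) from hv]
  simp only [Pi.smul_apply, Pi.sub_apply, smul_eq_mul]
  field_simp
  ring
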